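/- Linear special case: Under the hypotheses of the finite time stability theorem with f ≡ 0 (so L = 0 and m = 0), if [1 + b₀q_u·T^q/(δ·Γ(q+1))]·E_q(σ(p+1)T^q) < ε/δ, then every solution with ‖ψ‖_∞ < δ and ‖u(t)‖ ≤ q_u satisfies ‖x(t)‖ < ε for all t ∈ [0,T]. -/

import Mathlib

open Set Real MeasureTheory intervalIntegral Filter

noncomputable def mittagLeffler (q z : ℝ) : ℝ :=
  ∑' k : ℕ, z ^ k / Real.Gamma (k * q + 1)

lemma real_beta (q β t : ℝ) (hq : 0 < q) (hβ : 0 ≤ β) (ht : 0 < t) :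
    ∫ s in (0:ℝ)..t, (t-s)^(q-1) * s^β
      = Real.Gamma q * Real.Gamma (β+1) / Real.Gamma (q+β+1) * t^(q+β) := by
  have h1 := Complex.betaIntegral_scaled (β+1) q (a := t) ht
  have hβ1 : 0 < ((β+1:ℝ):ℂ).re := by simp; linarith
  have hqc : 0 < ((q:ℝ):ℂ).re := by simp [hq]
  have h2 := Complex.Gamma_mul_Gamma_eq_betaIntegral hβ1 hqc
  have hGpos : 0 < Real.Gamma (q+β+1) := Real.Gamma_pos_of_pos (by linarith)
  have hG : Complex.Gamma ((β+1:ℝ):ℂ) * Complex.Gamma ((q:ℝ):ℂ)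
      = Complex.Gamma (((β+1:ℝ):ℂ) + ((q:ℝ):ℂ)) * Complex.betaIntegral (β+1) q := by
    exact_mod_cast h2
  have hsum : (((β+1:ℝ):ℂ) + ((q:ℝ):ℂ)) = ((q+β+1 : ℝ):ℂ) := by push_cast; ring
  rw [hsum, Complex.Gamma_ofReal, Complex.Gamma_ofReal, Complex.Gamma_ofReal] at hG
  have hbeta : Complex.betaIntegral (β+1) q
      = ((Real.Gamma (β+1) * Real.Gamma q / Real.Gamma (q+β+1) : ℝ) : ℂ) := by
    have hne : ((Real.Gamma (q+β+1) : ℝ):ℂ) ≠ 0 := by exact_mod_cast hGpos.ne'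
    rw [Complex.ofReal_div, Complex.ofReal_mul, eq_div_iff hne]
    linear_combination -hG
  have hleft : (∫ x in (0:ℝ)..t, (x:ℂ) ^ ((β+1:ℂ) - 1) * ((t:ℂ) - x) ^ ((q:ℂ)-1))
      = ((∫ s in (0:ℝ)..t, (t-s)^(q-1) * s^β : ℝ) : ℂ) := by
    rw [← intervalIntegral.integral_ofReal]
    refine intervalIntegral.integral_congr fun s hs => ?_
    rw [uIcc_of_le ht.le] at hs
    rw [Complex.ofReal_mul, Complex.ofReal_cpow hs.1 β,
      Complex.ofReal_cpow (by linarith [hs.2] : (0:ℝ) ≤ t - s) (q-1)]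
    push_cast
    rw [show (β:ℂ)+1-1 = (β:ℂ) by ring]
    ring
  have hpow : ((t:ℂ) ^ ((β+1:ℂ) + (q:ℂ) - 1)) = ((t ^ (q+β) : ℝ) : ℂ) := by
    rw [Complex.ofReal_cpow ht.le]
    push_cast
    rw [show (β:ℂ)+1+(q:ℂ)-1 = ((q:ℂ)+(β:ℂ)) by ring]
  have h1' : ((∫ s in (0:ℝ)..t, (t-s)^(q-1) * s^β : ℝ) : ℂ)
      = ((t ^ (q+β) * (Real.Gamma (β+1) * Real.Gamma q / Real.Gamma (q+β+1) : ℝ) : ℝ) : ℂ) := by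
    rw [← hleft]
    push_cast
    rw [h1, hbeta, ← hpow]
    push_cast
    ring
  have := Complex.ofReal_injective h1'
  rw [this]; ring

lemma kernel_integrable (q t β : ℝ) (hq : 0 < q) (hβ : 0 ≤ β) :
    IntervalIntegrable (fun s => (t-s)^(q-1) * s^β) volume 0 t := by
  have h1 : IntervalIntegrable (fun s : ℝ => (t-s)^(q-1)) volume 0 t := by
    have := (intervalIntegrable_rpow' (a := 0) (b := t)
      (show (-1:ℝ) < q - 1 by linarith)).comp_sub_left t
    simpa using this.symm
  exact h1.mul_continuousOn ((Real.continuous_rpow_const hβ).continuousOn)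

lemma key_int (q t β : ℝ) (hq : 0 < q) (ht : 0 < t) (hβ : 0 ≤ β) :
    (Real.Gamma q)⁻¹ * ∫ s in (0:ℝ)..t, (t-s)^(q-1) * s^β
      = Real.Gamma (β+1) / Real.Gamma (q+β+1) * t^(q+β) := by
  have hΓq : 0 < Real.Gamma q := Real.Gamma_pos_of_pos hq
  have hΓ : 0 < Real.Gamma (q+β+1) := Real.Gamma_pos_of_pos (by linarith)
  rw [real_beta q β t hq hβ ht]; field_simp

lemma gamma_fact_le (q : ℝ) (hq : 0 < q) (m : ℕ) (hmq : 1 ≤ (m:ℝ) * q) (k : ℕ) (hk : m ≤ k) :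
    ((Nat.factorial (k / m) : ℕ) : ℝ) ≤ Real.Gamma (k * q + 1) := by
  have hm : 0 < m := by
    rcases Nat.eq_zero_or_pos m with h | h
    · simp [h] at hmq; linarith
    · exact h
  set j := k / m with hj
  have hj1 : 1 ≤ j := (Nat.one_le_div_iff hm).mpr hk
  have hjm : (j * m : ℕ) ≤ k := Nat.div_mul_le_self k m
  have hjk : (j : ℝ) ≤ (k:ℝ) * q := by
    have h1 : (j:ℝ) * m ≤ (k:ℝ) := by exact_mod_cast hjm
    have h2 : (j:ℝ) ≤ (j:ℝ) * ((m:ℝ)*q) := by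
      have hj1' : (1:ℝ) ≤ (j:ℝ) := by exact_mod_cast hj1
      nlinarith
    nlinarith [hq.le, Nat.cast_nonneg (α := ℝ) j]
  have hmono := Real.Gamma_strictMonoOn_Ici.monotoneOn
  have h2j : (2:ℝ) ≤ (j:ℝ) + 1 := by
    have : (1:ℝ) ≤ j := by exact_mod_cast hj1
    linarith
  have := hmono (a := (j:ℝ)+1) (b := (k:ℝ)*q+1) (by simpa using h2j)
    (by simp; linarith) (by linarith)
  rw [Real.Gamma_nat_eq_factorial] at this
  exact this

lemma summable_ml_aux (q z : ℝ) (hq : 0 < q) (hz : 0 ≤ z) :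
    Summable (fun k : ℕ => z ^ k / Real.Gamma (k * q + 1)) := by
  set m := ⌈1/q⌉₊ with hmdef
  have hm : 0 < m := Nat.ceil_pos.mpr (by positivity)
  have hmq : 1 ≤ (m:ℝ) * q := by
    have h := Nat.le_ceil (1/q)
    rw [← hmdef] at h
    have := (div_le_iff₀ hq).mp h
    linarith
  haveI : NeZero m := ⟨hm.ne'⟩
  set C := (max 1 z) ^ m with hC
  have hC1 : (1:ℝ) ≤ C := by
    calc (1:ℝ) = 1^m := (one_pow m).symm
    _ ≤ (max 1 z)^m := pow_le_pow_left₀ zero_le_one (le_max_left 1 z) m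
  have hH : Summable (fun j : ℕ => C * ((z^m)^j / (Nat.factorial j : ℕ))) :=
    (Real.summable_pow_div_factorial (z^m)).mul_left C
  have hH' : Summable (fun j : ℕ => C * ((z^m)^(j+1) / (Nat.factorial (j+1) : ℕ))) :=
    (summable_nat_add_iff 1).mpr hH
  have hfin : Summable (fun _ : Fin m => (1:ℝ)) := Summable.of_finite
  have hprod := hH'.mul_of_nonneg hfin
    (fun j => by positivity) (fun _ => zero_le_one)
  have hcomp : Summable (fun k : ℕ => C * ((z^m)^(k/m+1) / (Nat.factorial (k/m+1) : ℕ))) := by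
    have h2 := (Nat.divModEquiv m).summable_iff.mpr hprod
    simpa [Function.comp_def] using h2
  have key : ∀ k : ℕ, z^(k+m) / Real.Gamma (↑(k+m) * q + 1)
      ≤ C * ((z^m)^(k/m+1) / (Nat.factorial (k/m+1) : ℕ)) := by
    intro k
    have hjdef : (k + m) / m = k / m + 1 := Nat.add_div_right k hm
    set K := k + m with hKdef
    set j := K / m with hj2
    have hfac_le : ((Nat.factorial j : ℕ) : ℝ) ≤ Real.Gamma (K * q + 1) :=
      gamma_fact_le q hq m hmq K (by omega)
    have hfacpos : (0:ℝ) < ((Nat.factorial j : ℕ) : ℝ) := by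
      exact_mod_cast Nat.factorial_pos j
    have hzK : z ^ K ≤ C * (z^m)^j := by
      have hmod : m * j + K % m = K := Nat.div_add_mod K m
      have hr : K % m ≤ m := (Nat.mod_lt K hm).le
      calc z ^ K = (z^m)^j * z^(K % m) := by rw [← pow_mul, ← pow_add, hmod]
      _ ≤ (z^m)^j * C := by
          apply mul_le_mul_of_nonneg_left _ (by positivity)
          calc z^(K%m) ≤ (max 1 z)^(K%m) := pow_le_pow_left₀ hz (le_max_right 1 z) _
          _ ≤ (max 1 z)^m := pow_le_pow_right₀ (le_max_left 1 z) hr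
      _ = C * (z^m)^j := mul_comm _ _
    rw [← hjdef, mul_div_assoc']
    exact div_le_div₀ (by positivity) hzK hfacpos hfac_le
  have hmain : Summable (fun k : ℕ => z ^ (k + m) / Real.Gamma (↑(k + m) * q + 1)) :=
    Summable.of_nonneg_of_le
      (fun k => div_nonneg (pow_nonneg hz _) (Real.Gamma_pos_of_pos (by positivity)).le)
      key hcomp
  exact (summable_nat_add_iff m).mp hmain

/-- Finite time stability, linear case (f ≡ 0). -/
theorem finite_time_stability_linear
    (n nu p : ℕ) (q T τm δ ε qu σ b₀ : ℝ)
    (hq : 0 < q) (hq1 : q ≤ 1) (hT : 0 < T) (hτ : 0 ≤ τm)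
    (hδ : 0 < δ) (hε : 0 < ε) (hqu : 0 < qu)
    (A₀ : (Fin n → ℝ) →L[ℝ] (Fin n → ℝ))
    (A : Fin p → ((Fin n → ℝ) →L[ℝ] (Fin n → ℝ)))
    (B₀ : (Fin nu → ℝ) →L[ℝ] (Fin n → ℝ))
    (τ : Fin p → ℝ) (hτi : ∀ i, 0 < τ i ∧ τ i ≤ τm)
    (hσ : ‖A₀‖ ≤ σ) (hσi : ∀ i, ‖A i‖ ≤ σ) (hb : ‖B₀‖ ≤ b₀)
    (u : ℝ → Fin nu → ℝ) (hu : ∀ t ∈ Icc (0:ℝ) T, ‖u t‖ ≤ qu)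
    (x : ℝ → Fin n → ℝ)
    (hx_cont : ContinuousOn x (Icc (-τm) T))
    (hψ : ∀ t ∈ Icc (-τm) (0:ℝ), ‖x t‖ < δ)
    (hsol : ∀ t ∈ Icc (0:ℝ) T,
      x t = x 0 + (Real.Gamma q)⁻¹ •
        ∫ s in (0:ℝ)..t, (t - s) ^ (q - 1) •
          (A₀ (x s) + (∑ i : Fin p, A i (x (s - τ i))) + B₀ (u s)))
    (hcrit : (1 + b₀ * qu * T ^ q / (δ * Real.Gamma (q + 1)))
        * mittagLeffler q (σ * (p + 1) * T ^ q) < ε / δ) :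
    ∀ t ∈ Icc (0:ℝ) T, ‖x t‖ < ε := by
  have hΓq : 0 < Real.Gamma q := Real.Gamma_pos_of_pos hq
  have hΓq1 : 0 < Real.Gamma (q+1) := Real.Gamma_pos_of_pos (by linarith)
  have hσ0 : 0 ≤ σ := (norm_nonneg _).trans hσ
  have hb0 : 0 ≤ b₀ := (norm_nonneg _).trans hb
  set a := σ * ((p:ℝ)+1) with hadef
  have ha : 0 ≤ a := by positivity
  set c := b₀ * qu with hcdef
  have hc : 0 ≤ c := by positivity
  clear_value a c
  -- maximum of history
  obtain ⟨t₀, ht₀, hhist'⟩ := isCompact_Icc.exists_isMaxOn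
    (Set.nonempty_Icc.mpr (by linarith : -τm ≤ (0:ℝ)))
    ((hx_cont.mono (Icc_subset_Icc le_rfl hT.le)).norm)
  have hhist : ∀ y ∈ Icc (-τm) (0:ℝ), ‖x y‖ ≤ ‖x t₀‖ := fun y hy => hhist' hy
  set δ' := ‖x t₀‖ with hδ'def
  have hδ'δ : δ' < δ := hψ t₀ ht₀
  have hδ'0 : 0 ≤ δ' := norm_nonneg _
  clear_value δ'
  -- global bound
  obtain ⟨t₁, ht₁, hMmax'⟩ := isCompact_Icc.exists_isMaxOn
    (Set.nonempty_Icc.mpr (by linarith : -τm ≤ T)) hx_cont.norm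
  have hMmax : ∀ y ∈ Icc (-τm) T, ‖x y‖ ≤ ‖x t₁‖ := fun y hy => hMmax' hy
  set M := ‖x t₁‖ with hMdef
  have hM0 : 0 ≤ M := norm_nonneg _
  clear_value M
  set K := δ' + c * T^q / Real.Gamma (q+1) with hKdef
  have hδ'K : δ' ≤ K := by
    rw [hKdef]
    have : 0 ≤ c * T^q / Real.Gamma (q+1) := by positivity
    linarith
  have hK0 : 0 ≤ K := le_trans hδ'0 hδ'K
  clear_value K
  have hΓk : ∀ k : ℕ, 0 < Real.Gamma ((k:ℝ)*q+1) := fun k =>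
    Real.Gamma_pos_of_pos (by positivity)
  set φ : ℕ → ℝ → ℝ := fun N t =>
    K * ∑ k ∈ Finset.range N, a^k * t^((k:ℝ)*q) / Real.Gamma ((k:ℝ)*q+1)
      + M * (a^N * t^((N:ℝ)*q) / Real.Gamma ((N:ℝ)*q+1)) with hφdef
  clear_value φ
  have hφ_nonneg : ∀ N t, 0 ≤ t → 0 ≤ φ N t := by
    intro N t htt
    have h1 : ∀ k : ℕ, 0 ≤ a^k * t^((k:ℝ)*q) / Real.Gamma ((k:ℝ)*q+1) := fun k =>
      div_nonneg (mul_nonneg (pow_nonneg ha _) (Real.rpow_nonneg htt _)) (hΓk k).le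
    simp only [hφdef]
    exact add_nonneg (mul_nonneg hK0 (Finset.sum_nonneg fun k _ => h1 k))
      (mul_nonneg hM0 (h1 N))
  have hφ_mono : ∀ N s t, 0 ≤ s → s ≤ t → φ N s ≤ φ N t := by
    intro N s t hs hst
    have h1 : ∀ k : ℕ, a^k * s^((k:ℝ)*q) / Real.Gamma ((k:ℝ)*q+1)
        ≤ a^k * t^((k:ℝ)*q) / Real.Gamma ((k:ℝ)*q+1) := by
      intro k
      have := Real.rpow_le_rpow hs hst (by positivity : 0 ≤ (k:ℝ)*q)
      gcongr
    simp only [hφdef]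
    exact add_le_add
      (mul_le_mul_of_nonneg_left (Finset.sum_le_sum fun k _ => h1 k) hK0)
      (mul_le_mul_of_nonneg_left (h1 N) hM0)
  have hφ_ge_K : ∀ N t, 0 ≤ t → 1 ≤ N → K ≤ φ N t := by
    intro N t htt hN
    have h0 : (fun k : ℕ => a^k * t^((k:ℝ)*q) / Real.Gamma ((k:ℝ)*q+1)) 0 = 1 := by
      simp [Real.Gamma_one]
    have h1 : (1:ℝ) ≤ ∑ k ∈ Finset.range N, a^k * t^((k:ℝ)*q) / Real.Gamma ((k:ℝ)*q+1) := by
      have hs := Finset.single_le_sum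
        (f := fun k : ℕ => a^k * t^((k:ℝ)*q) / Real.Gamma ((k:ℝ)*q+1))
        (fun k _ => div_nonneg (mul_nonneg (pow_nonneg ha _) (Real.rpow_nonneg htt _)) (hΓk k).le)
        (Finset.mem_range.mpr (show 0 < N by omega))
      simpa [Real.Gamma_one] using hs
    have h2 : 0 ≤ M * (a^N * t^((N:ℝ)*q) / Real.Gamma ((N:ℝ)*q+1)) :=
      mul_nonneg hM0 (div_nonneg (mul_nonneg (pow_nonneg ha _) (Real.rpow_nonneg htt _)) (hΓk N).le)
    have h3 : K * 1 ≤ K * ∑ k ∈ Finset.range N, a^k * t^((k:ℝ)*q) / Real.Gamma ((k:ℝ)*q+1) :=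
      mul_le_mul_of_nonneg_left h1 hK0
    simp only [hφdef]; linarith
  have claim : ∀ N : ℕ, ∀ t ∈ Icc (-τm) T, ‖x t‖ ≤ φ N (max t 0) := by
    intro N
    induction N with
    | zero =>
      intro t ht
      have : φ 0 (max t 0) = M := by simp [hφdef, Real.Gamma_one]
      rw [this]
      exact hMmax t ht
    | succ N ih =>
      intro t ht
      rcases le_or_gt t 0 with ht0 | ht0
      · rw [max_eq_right ht0]
        exact (hhist t ⟨ht.1, ht0⟩).trans
          (hδ'K.trans (hφ_ge_K (N+1) 0 le_rfl (by omega)))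
      · rw [max_eq_left ht0.le]
        have htT : t ≤ T := ht.2
        -- the forcing term
        set F := fun s => A₀ (x s) + (∑ i : Fin p, A i (x (s - τ i))) + B₀ (u s) with hFdef
        have hF_bound : ∀ s ∈ Icc (0:ℝ) t, ‖F s‖ ≤ a * φ N s + c := by
          intro s hs
          have hs0 : 0 ≤ s := hs.1
          have hsT : s ≤ T := hs.2.trans htT
          have hxs : ‖x s‖ ≤ φ N s := by
            have h := ih s ⟨by linarith, hsT⟩
            rwa [max_eq_left hs0] at h
          have hφs0 : 0 ≤ φ N s := hφ_nonneg N s hs0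
          have hxd : ∀ i : Fin p, ‖x (s - τ i)‖ ≤ φ N s := by
            intro i
            obtain ⟨hτi0, hτim⟩ := hτi i
            have h1 := ih (s - τ i) ⟨by linarith, by linarith⟩
            exact h1.trans (hφ_mono N _ s (le_max_right _ _) (max_le (by linarith) hs0))
          have h1 : ‖A₀ (x s)‖ ≤ σ * φ N s :=
            (A₀.le_opNorm _).trans (mul_le_mul hσ hxs (norm_nonneg _) hσ0)
          have h2 : ‖∑ i : Fin p, A i (x (s - τ i))‖ ≤ (p:ℝ) * (σ * φ N s) := by
            calc ‖∑ i : Fin p, A i (x (s - τ i))‖ ≤ ∑ i : Fin p, ‖A i (x (s - τ i))‖ :=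
              norm_sum_le _ _
            _ ≤ ∑ _i : Fin p, σ * φ N s := Finset.sum_le_sum fun i _ =>
              ((A i).le_opNorm _).trans (mul_le_mul (hσi i) (hxd i) (norm_nonneg _) hσ0)
            _ = (p:ℝ) * (σ * φ N s) := by
              rw [Finset.sum_const, Finset.card_univ, Fintype.card_fin, nsmul_eq_mul]
          have h3 : ‖B₀ (u s)‖ ≤ b₀ * qu :=
            (B₀.le_opNorm _).trans (mul_le_mul hb (hu s ⟨hs0, hsT⟩) (norm_nonneg _) hb0)
          have hFsplit : ‖F s‖ ≤ ‖A₀ (x s)‖ + ‖∑ i : Fin p, A i (x (s - τ i))‖ + ‖B₀ (u s)‖ := by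
            rw [hFdef]; exact norm_add₃_le
          calc ‖F s‖ ≤ ‖A₀ (x s)‖ + ‖∑ i : Fin p, A i (x (s - τ i))‖ + ‖B₀ (u s)‖ := hFsplit
          _ ≤ σ * φ N s + (p:ℝ) * (σ * φ N s) + b₀ * qu := by linarith
          _ = a * φ N s + c := by rw [hadef, hcdef]; ring
        set G := fun s => (t-s)^(q-1) * (a * φ N s + c) with hGdef
        clear_value G
        have hGeq : G = fun s =>
            (∑ k ∈ Finset.range N,
              a*K*a^k / Real.Gamma ((k:ℝ)*q+1) * ((t-s)^(q-1) * s^((k:ℝ)*q)))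
            + (a*M*a^N / Real.Gamma ((N:ℝ)*q+1) * ((t-s)^(q-1) * s^((N:ℝ)*q))
               + c * ((t-s)^(q-1) * s^(0:ℝ))) := by
          funext s
          have h0 : G s = a*K*((t-s)^(q-1) * ∑ k ∈ Finset.range N,
                a^k * s^((k:ℝ)*q) / Real.Gamma ((k:ℝ)*q+1))
              + (a*M*a^N / Real.Gamma ((N:ℝ)*q+1) * ((t-s)^(q-1) * s^((N:ℝ)*q))
                 + c * ((t-s)^(q-1) * s^(0:ℝ))) := by
            simp only [hGdef, hφdef, Real.rpow_zero, mul_one]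
            ring
          rw [h0, Finset.mul_sum, Finset.mul_sum]
          congr 1
          exact Finset.sum_congr rfl fun k _ => by ring
        have hker : ∀ k : ℕ, IntervalIntegrable
            (fun s => (t-s)^(q-1) * s^((k:ℝ)*q)) volume 0 t :=
          fun k => kernel_integrable q t _ hq (by positivity)
        have hker0 : IntervalIntegrable (fun s => (t-s)^(q-1) * s^(0:ℝ)) volume 0 t :=
          kernel_integrable q t 0 hq le_rfl
        have hsumInt : IntervalIntegrable (fun s => ∑ k ∈ Finset.range N,
            a*K*a^k / Real.Gamma ((k:ℝ)*q+1) * ((t-s)^(q-1) * s^((k:ℝ)*q))) volume 0 t := by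
          have hs := IntervalIntegrable.sum (Finset.range N)
            (f := fun k s => a*K*a^k / Real.Gamma ((k:ℝ)*q+1) * ((t-s)^(q-1) * s^((k:ℝ)*q)))
            (fun k _ => (hker k).const_mul _)
          rw [Finset.sum_fn] at hs
          exact hs
        have hGint : IntervalIntegrable G volume 0 t := by
          rw [hGeq]
          exact hsumInt.add (((hker N).const_mul _).add (hker0.const_mul _))
        have hIbound : ‖∫ s in (0:ℝ)..t, (t - s) ^ (q - 1) • F s‖
            ≤ ∫ s in (0:ℝ)..t, G s := by
          by_cases hInt : IntervalIntegrable (fun s => (t - s) ^ (q - 1) • F s) volume 0 t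
          · calc ‖∫ s in (0:ℝ)..t, (t - s) ^ (q - 1) • F s‖
                ≤ ∫ s in (0:ℝ)..t, ‖(t - s) ^ (q - 1) • F s‖ :=
                  intervalIntegral.norm_integral_le_integral_norm ht0.le
            _ ≤ ∫ s in (0:ℝ)..t, G s := by
                apply intervalIntegral.integral_mono_on ht0.le hInt.norm hGint
                intro s hs
                have hts : 0 ≤ t - s := by linarith [hs.2]
                simp only [hGdef]
                rw [norm_smul, Real.norm_eq_abs, abs_of_nonneg (Real.rpow_nonneg hts _)]
                exact mul_le_mul_of_nonneg_left (hF_bound s hs) (Real.rpow_nonneg hts _)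
          · rw [intervalIntegral.integral_undef hInt, norm_zero]
            apply intervalIntegral.integral_nonneg ht0.le
            intro s hs
            have hts : 0 ≤ t - s := by linarith [hs.2]
            have hφs0 : 0 ≤ φ N s := hφ_nonneg N s hs.1
            simp only [hGdef]
            exact mul_nonneg (Real.rpow_nonneg hts _)
              (add_nonneg (mul_nonneg ha hφs0) hc)
        have hx0 : ‖x 0‖ ≤ δ' := hhist 0 ⟨by linarith, le_rfl⟩
        have hxt : ‖x t‖ ≤ δ' + (Real.Gamma q)⁻¹ * ∫ s in (0:ℝ)..t, G s := by
          rw [hsol t ⟨ht0.le, htT⟩]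
          calc ‖x 0 + (Real.Gamma q)⁻¹ • ∫ s in (0:ℝ)..t, (t - s) ^ (q - 1) • F s‖
              ≤ ‖x 0‖ + ‖(Real.Gamma q)⁻¹ • ∫ s in (0:ℝ)..t, (t - s) ^ (q - 1) • F s‖ :=
                norm_add_le _ _
          _ ≤ δ' + (Real.Gamma q)⁻¹ * ∫ s in (0:ℝ)..t, G s := by
              rw [norm_smul, Real.norm_eq_abs, abs_of_nonneg (inv_nonneg.mpr hΓq.le)]
              exact add_le_add hx0
                (mul_le_mul_of_nonneg_left hIbound (inv_nonneg.mpr hΓq.le))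
        have hIcalc : (Real.Gamma q)⁻¹ * ∫ s in (0:ℝ)..t, G s
            = (∑ k ∈ Finset.range N,
                K * a^(k+1) * t^(q + (k:ℝ)*q) / Real.Gamma (q + (k:ℝ)*q + 1))
              + (M * a^(N+1) * t^(q + (N:ℝ)*q) / Real.Gamma (q + (N:ℝ)*q + 1)
                 + c * (t^q / Real.Gamma (q+1))) := by
          rw [hGeq]
          have hfs := intervalIntegral.integral_finset_sum (μ := volume) (a := (0:ℝ)) (b := t)
            (s := Finset.range N)
            (f := fun (k:ℕ) (y:ℝ) => a*K*a^k / Real.Gamma ((k:ℝ)*q+1) * ((t-y)^(q-1) * y^((k:ℝ)*q)))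
            (fun k _ => (hker k).const_mul _)
          rw [intervalIntegral.integral_add hsumInt
              (((hker N).const_mul _).add (hker0.const_mul _)), hfs,
            intervalIntegral.integral_add ((hker N).const_mul _) (hker0.const_mul _)]
          simp only [intervalIntegral.integral_const_mul]
          rw [mul_add, mul_add, Finset.mul_sum]
          congr 1
          · apply Finset.sum_congr rfl
            intro k _
            have hk := key_int q t ((k:ℝ)*q) hq ht0 (by positivity)
            calc (Real.Gamma q)⁻¹ * (a*K*a^k / Real.Gamma ((k:ℝ)*q+1)
                  * ∫ s in (0:ℝ)..t, (t-s)^(q-1) * s^((k:ℝ)*q))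
                = a*K*a^k / Real.Gamma ((k:ℝ)*q+1)
                  * ((Real.Gamma q)⁻¹ * ∫ s in (0:ℝ)..t, (t-s)^(q-1) * s^((k:ℝ)*q)) := by
                  ring
            _ = a*K*a^k / Real.Gamma ((k:ℝ)*q+1)
                  * (Real.Gamma ((k:ℝ)*q+1) / Real.Gamma (q+(k:ℝ)*q+1) * t^(q+(k:ℝ)*q)) := by
                  rw [hk]
            _ = K * a^(k+1) * t^(q + (k:ℝ)*q) / Real.Gamma (q + (k:ℝ)*q + 1) := by
                  have hΓ1 := (hΓk k).ne'
                  have hΓ2 := (Real.Gamma_pos_of_pos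
                    (show 0 < q + (k:ℝ)*q + 1 by positivity)).ne'
                  field_simp
                  ring
          · congr 1
            · have hk := key_int q t ((N:ℝ)*q) hq ht0 (by positivity)
              calc (Real.Gamma q)⁻¹ * (a*M*a^N / Real.Gamma ((N:ℝ)*q+1)
                    * ∫ s in (0:ℝ)..t, (t-s)^(q-1) * s^((N:ℝ)*q))
                  = a*M*a^N / Real.Gamma ((N:ℝ)*q+1)
                    * ((Real.Gamma q)⁻¹ * ∫ s in (0:ℝ)..t, (t-s)^(q-1) * s^((N:ℝ)*q)) := by
                    ring
              _ = a*M*a^N / Real.Gamma ((N:ℝ)*q+1)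
                    * (Real.Gamma ((N:ℝ)*q+1) / Real.Gamma (q+(N:ℝ)*q+1) * t^(q+(N:ℝ)*q)) := by
                    rw [hk]
              _ = M * a^(N+1) * t^(q + (N:ℝ)*q) / Real.Gamma (q + (N:ℝ)*q + 1) := by
                    have hΓ1 := (hΓk N).ne'
                    have hΓ2 := (Real.Gamma_pos_of_pos
                      (show 0 < q + (N:ℝ)*q + 1 by positivity)).ne'
                    field_simp
                    ring
            · have hk := key_int q t 0 hq ht0 le_rfl
              calc (Real.Gamma q)⁻¹ * (c * ∫ s in (0:ℝ)..t, (t-s)^(q-1) * s^(0:ℝ))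
                  = c * ((Real.Gamma q)⁻¹ * ∫ s in (0:ℝ)..t, (t-s)^(q-1) * s^(0:ℝ)) := by ring
              _ = c * (Real.Gamma (0+1) / Real.Gamma (q+0+1) * t^(q+0)) := by rw [hk]
              _ = c * (t^q / Real.Gamma (q+1)) := by
                    rw [zero_add, Real.Gamma_one, add_zero]
                    ring
        have hφsucc : φ (N+1) t = K
            + ((∑ k ∈ Finset.range N,
                K * a^(k+1) * t^(q + (k:ℝ)*q) / Real.Gamma (q + (k:ℝ)*q + 1))
               + M * a^(N+1) * t^(q + (N:ℝ)*q) / Real.Gamma (q + (N:ℝ)*q + 1)) := by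
          simp only [hφdef]
          rw [Finset.sum_range_succ']
          rw [mul_add, Finset.mul_sum]
          have hu0 : a^0 * t^(((0:ℕ):ℝ)*q) / Real.Gamma (((0:ℕ):ℝ)*q+1) = 1 := by
            simp [Real.Gamma_one]
          rw [hu0, mul_one]
          have hsum_eq : ∀ k : ℕ, K * (a^(k+1) * t^(((k+1:ℕ):ℝ)*q) / Real.Gamma (((k+1:ℕ):ℝ)*q+1))
              = K * a^(k+1) * t^(q + (k:ℝ)*q) / Real.Gamma (q + (k:ℝ)*q + 1) := by
            intro k
            have hc1 : ((k+1:ℕ):ℝ)*q = q + (k:ℝ)*q := by push_cast; ring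
            rw [hc1]; ring
          have hm1 : M * (a^(N+1) * t^(((N+1:ℕ):ℝ)*q) / Real.Gamma (((N+1:ℕ):ℝ)*q+1))
              = M * a^(N+1) * t^(q + (N:ℝ)*q) / Real.Gamma (q + (N:ℝ)*q + 1) := by
            have hc1 : ((N+1:ℕ):ℝ)*q = q + (N:ℝ)*q := by push_cast; ring
            rw [hc1]; ring
          rw [Finset.sum_congr rfl (fun k _ => hsum_eq k), hm1]
          ring
        have htq : t^q ≤ T^q := Real.rpow_le_rpow ht0.le htT hq.le
        have hKineq : δ' + c * (t^q / Real.Gamma (q+1)) ≤ K := by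
          rw [hKdef]
          have : c * (t^q / Real.Gamma (q+1)) ≤ c * T^q / Real.Gamma (q+1) := by
            rw [mul_div_assoc]
            exact mul_le_mul_of_nonneg_left (by gcongr) hc
          linarith
        rw [hIcalc] at hxt
        rw [hφsucc]
        linarith
  -- pass to the limit
  intro t ht
  set z := a * T^q with hzdef
  have hz : 0 ≤ z := by positivity
  clear_value z
  have hsum := summable_ml_aux q z hq hz
  have hbd : ∀ N : ℕ, ‖x t‖ ≤ K * ∑ k ∈ Finset.range N, z^k / Real.Gamma ((k:ℝ)*q+1)
      + M * (z^N / Real.Gamma ((N:ℝ)*q+1)) := by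
    intro N
    have h1 := claim N t ⟨by linarith [ht.1], ht.2⟩
    rw [max_eq_left ht.1] at h1
    refine h1.trans ?_
    have hzk : ∀ k : ℕ, z^k = a^k * T^((k:ℝ)*q) := by
      intro k
      rw [hzdef, mul_pow, ← Real.rpow_natCast (T^q) k, ← Real.rpow_mul hT.le, mul_comm q (k:ℝ)]
    have h2 : ∀ k : ℕ, a^k * t^((k:ℝ)*q) / Real.Gamma ((k:ℝ)*q+1)
        ≤ z^k / Real.Gamma ((k:ℝ)*q+1) := by
      intro k
      rw [hzk k]
      have := Real.rpow_le_rpow ht.1 ht.2 (by positivity : 0 ≤ (k:ℝ)*q)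
      gcongr
    simp only [hφdef]
    exact add_le_add
      (mul_le_mul_of_nonneg_left (Finset.sum_le_sum fun k _ => h2 k) hK0)
      (mul_le_mul_of_nonneg_left (h2 N) hM0)
  have hE : HasSum (fun k : ℕ => z^k / Real.Gamma ((k:ℝ)*q+1)) (mittagLeffler q z) := by
    have := hsum.hasSum
    exact this
  have hlim : Tendsto (fun N : ℕ => K * ∑ k ∈ Finset.range N, z^k / Real.Gamma ((k:ℝ)*q+1)
      + M * (z^N / Real.Gamma ((N:ℝ)*q+1))) atTop (nhds (K * mittagLeffler q z + M * 0)) :=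
    ((hE.tendsto_sum_nat.const_mul K).add ((hsum.tendsto_atTop_zero).const_mul M))
  have hle : ‖x t‖ ≤ K * mittagLeffler q z + M * 0 :=
    ge_of_tendsto hlim (Filter.Eventually.of_forall hbd)
  rw [mul_zero, add_zero] at hle
  have hE1 : (1:ℝ) ≤ mittagLeffler q z := by
    have h0 := Summable.le_tsum hsum 0 (fun j _ => by positivity)
    simpa [Real.Gamma_one, mittagLeffler] using h0
  have hfinal : K * mittagLeffler q z < ε := by
    have hKlt : K < δ + c * T^q / Real.Gamma (q+1) := by
      simp only [hKdef]; linarith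
    have hEpos : (0:ℝ) < mittagLeffler q z := lt_of_lt_of_le one_pos hE1
    have h1 : K * mittagLeffler q z < (δ + c * T^q / Real.Gamma (q+1)) * mittagLeffler q z :=
      mul_lt_mul_of_pos_right hKlt hEpos
    have h2 : (δ + c * T^q / Real.Gamma (q+1)) * mittagLeffler q z
        = δ * ((1 + c * T ^ q / (δ * Real.Gamma (q + 1))) * mittagLeffler q z) := by
      field_simp
    have h3 : δ * ((1 + c * T ^ q / (δ * Real.Gamma (q + 1))) * mittagLeffler q z)
        < δ * (ε / δ) := by
      apply mul_lt_mul_of_pos_left _ hδ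
      exact hcrit
    have h4 : δ * (ε / δ) = ε := by field_simp
    calc K * mittagLeffler q z < (δ + c * T^q / Real.Gamma (q+1)) * mittagLeffler q z := h1
    _ = δ * ((1 + c * T ^ q / (δ * Real.Gamma (q + 1))) * mittagLeffler q z) := h2
    _ < δ * (ε / δ) := h3
    _ = ε := h4
  linarith
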